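/- If E₁, E₂, E₃, E₄ is an octahedral 4-coloring of S² with respect to a regular octahedron given by an orthonormal basis u₁, u₂, u₃ (each color class octahedral with respect to the same octahedron), then each color class is locally octahedral: (u·v)(u·w)(v·w) ≥ 0 for all u, v, w in the same class. -/

import Mathlib

theorem stmt_18 (u : Fin 3 → EuclideanSpace ℝ (Fin 3))
    (hu : Orthonormal ℝ u)
    (E : Fin 4 → Set (EuclideanSpace ℝ (Fin 3)))
    (hunion : (⋃ i, E i) = {x : EuclideanSpace ℝ (Fin 3) | ‖x‖ = 1})
    (hdisj : ∀ i j, i ≠ j → Disjoint (E i) (E j))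
    (hne : ∀ i, (E i).Nonempty)
    (hoct : ∀ i, ∃ ε : Fin 3 → ℝ, (∀ k, ε k = 1 ∨ ε k = -1) ∧
      ∀ x ∈ E i, (∀ k, 0 ≤ ε k * (inner ℝ x (u k) : ℝ)) ∨ (∀ k, ε k * (inner ℝ x (u k) : ℝ) ≤ 0)) :
    ∀ i, ∀ a ∈ E i, ∀ b ∈ E i, ∀ c ∈ E i,
      (inner ℝ a b : ℝ) * (inner ℝ a c : ℝ) * (inner ℝ b c : ℝ) ≥ 0 := by
  have hcard : Fintype.card (Fin 3) = Module.finrank ℝ (EuclideanSpace ℝ (Fin 3)) := by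
    simp
  set Bb := basisOfOrthonormalOfCardEqFinrank hu hcard with hBb
  have hBco : (Bb : Fin 3 → EuclideanSpace ℝ (Fin 3)) = u :=
    coe_basisOfOrthonormalOfCardEqFinrank hu hcard
  have hBon : Orthonormal ℝ Bb := by rw [hBco]; exact hu
  set B := Bb.toOrthonormalBasis hBon with hB
  have hBu : ∀ k, B k = u k := by
    intro k
    rw [hB, Module.Basis.coe_toOrthonormalBasis, hBco]
  have hib : ∀ x y : EuclideanSpace ℝ (Fin 3),
      (inner ℝ x y : ℝ) = ∑ k, (inner ℝ x (u k) : ℝ) * (inner ℝ y (u k) : ℝ) := by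
    intro x y
    have := B.sum_inner_mul_inner x y
    rw [← this]
    refine Finset.sum_congr rfl fun k _ => ?_
    rw [hBu, real_inner_comm (u k) y]
  intro i a ha b hb c hc
  obtain ⟨ε, hε1, hεx⟩ := hoct i
  have hε2 : ∀ k, ε k * ε k = 1 := by
    intro k; rcases hε1 k with h | h <;> rw [h] <;> norm_num
  have mnn : ∀ {x y : ℝ}, x ≤ 0 → y ≤ 0 → 0 ≤ x * y := fun {x y} hx hy => by nlinarith
  have key : ∀ x y : EuclideanSpace ℝ (Fin 3),
      (inner ℝ x y : ℝ) = ∑ k, (ε k * (inner ℝ x (u k) : ℝ)) * (ε k * (inner ℝ y (u k) : ℝ)) := by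
    intro x y
    rw [hib]
    refine Finset.sum_congr rfl fun k _ => ?_
    rw [mul_mul_mul_comm, hε2 k, one_mul]
  have sgnp : ∀ (p q : Fin 3 → ℝ), (∀ k, 0 ≤ p k) → (∀ k, 0 ≤ q k) →
      0 ≤ ∑ k, p k * q k := fun p q hp hq =>
    Finset.sum_nonneg fun k _ => mul_nonneg (hp k) (hq k)
  have sgnn : ∀ (p q : Fin 3 → ℝ), (∀ k, p k ≤ 0) → (∀ k, q k ≤ 0) →
      0 ≤ ∑ k, p k * q k := fun p q hp hq =>
    Finset.sum_nonneg fun k _ => mnn (hp k) (hq k)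
  have sgnm : ∀ (p q : Fin 3 → ℝ), (∀ k, 0 ≤ p k) → (∀ k, q k ≤ 0) →
      ∑ k, p k * q k ≤ 0 := fun p q hp hq =>
    Finset.sum_nonpos fun k _ => mul_nonpos_of_nonneg_of_nonpos (hp k) (hq k)
  have sgnm' : ∀ (p q : Fin 3 → ℝ), (∀ k, p k ≤ 0) → (∀ k, 0 ≤ q k) →
      ∑ k, p k * q k ≤ 0 := fun p q hp hq =>
    Finset.sum_nonpos fun k _ => mul_nonpos_of_nonpos_of_nonneg (hp k) (hq k)
  rw [key a b, key a c, key b c]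
  rcases hεx a ha with Ha | Ha <;> rcases hεx b hb with Hb | Hb <;>
    rcases hεx c hc with Hc | Hc
  · exact mul_nonneg (mul_nonneg (sgnp _ _ Ha Hb) (sgnp _ _ Ha Hc)) (sgnp _ _ Hb Hc)
  · exact mnn
      (mul_nonpos_of_nonneg_of_nonpos (sgnp _ _ Ha Hb) (sgnm _ _ Ha Hc)) (sgnm _ _ Hb Hc)
  · exact mnn
      (mul_nonpos_of_nonpos_of_nonneg (sgnm _ _ Ha Hb) (sgnp _ _ Ha Hc)) (sgnm' _ _ Hb Hc)
  · exact mul_nonneg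
      (mnn (sgnm _ _ Ha Hb) (sgnm _ _ Ha Hc)) (sgnn _ _ Hb Hc)
  · exact mul_nonneg
      (mnn (sgnm' _ _ Ha Hb) (sgnm' _ _ Ha Hc)) (sgnp _ _ Hb Hc)
  · exact mnn
      (mul_nonpos_of_nonpos_of_nonneg (sgnm' _ _ Ha Hb) (sgnn _ _ Ha Hc)) (sgnm _ _ Hb Hc)
  · exact mnn
      (mul_nonpos_of_nonneg_of_nonpos (sgnn _ _ Ha Hb) (sgnm' _ _ Ha Hc)) (sgnm' _ _ Hb Hc)
  · exact mul_nonneg (mul_nonneg (sgnn _ _ Ha Hb) (sgnn _ _ Ha Hc)) (sgnn _ _ Hb Hc)
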